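/- Let (X,d) be a semimetric space such that the topological space (X,τ_d) is first countable. Then the following are equivalent: (i) for all x,y∈X and every sequence (x_n), lim d(x_n,x)=0=lim d(x_n,y) implies x=y; (ii) (X,τ_d) is Hausdorff. -/
import Mathlib


open Set Filter Topology

structure IsSemimetric {X : Type*} (d : X → X → ℝ) : Prop where
  nonneg : ∀ x y, 0 ≤ d x y
  eq_iff : ∀ x y, d x y = 0 ↔ x = y
  symm : ∀ x y, d x y = d y x

/-- `η` is a homeomorphism of `[0,∞)` onto itself (increasing, `η 0 = 0`). -/
structure IsQSHomeo (η : ℝ → ℝ) : Prop where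
  maps : ∀ t, 0 ≤ t → 0 ≤ η t
  zero : η 0 = 0
  strictMonoOn : StrictMonoOn η (Set.Ici 0)
  surjOn : ∀ s, 0 ≤ s → ∃ t, 0 ≤ t ∧ η t = s
  continuousOn : ContinuousOn η (Set.Ici 0)

/-- `f` is an `η`-quasisymmetric mapping between the semimetric spaces `(X,d)` and `(Y,ρ)`. -/
def IsQuasisymmetric {X Y : Type*} (d : X → X → ℝ) (ρ : Y → Y → ℝ)
    (η : ℝ → ℝ) (f : X → Y) : Prop :=
  IsQSHomeo η ∧ ∀ (x a b : X) (t : ℝ), 0 < t →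
    d x a ≤ t * d x b → ρ (f x) (f a) ≤ η t * ρ (f x) (f b)

structure IsTriangleFunction {X : Type*} (d : X → X → ℝ) (Φ : ℝ → ℝ → ℝ) : Prop where
  symm : ∀ u v, Φ u v = Φ v u
  mono : ∀ u u' v v', 0 ≤ u → u ≤ u' → 0 ≤ v → v ≤ v' → Φ u v ≤ Φ u' v'
  zero : Φ 0 0 = 0
  tri : ∀ x y z, d x y ≤ Φ (d x z) (d y z)

def IsPtolemaic {X : Type*} (d : X → X → ℝ) : Prop :=
  ∀ x y z t : X, d x z * d t y ≤ d x y * d t z + d x t * d y z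

def distSet {X : Type*} (d : X → X → ℝ) (A : Set X) : Set ℝ :=
  {r | ∃ x ∈ A, ∃ y ∈ A, r = d x y}

noncomputable def sdiam {X : Type*} (d : X → X → ℝ) (A : Set X) : ℝ :=
  sSup (distSet d A)

def spectrum' {X : Type*} (d : X → X → ℝ) : Set ℝ := {r | ∃ x y : X, r = d x y}

def IsWeakSimilarity {X Y : Type*} (d : X → X → ℝ) (ρ : Y → Y → ℝ)
    (f : X → Y) (φ : ℝ → ℝ) : Prop :=
  Function.Bijective f ∧ StrictMonoOn φ (spectrum' d) ∧
    φ '' spectrum' d = spectrum' ρ ∧ ∀ x y, φ (d x y) = ρ (f x) (f y)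

/-- The topology `τ_d` generated by a semimetric `d`. -/
def tauD {X : Type*} (d : X → X → ℝ) : TopologicalSpace X where
  IsOpen A := ∀ a ∈ A, ∃ r > 0, {x | d a x < r} ⊆ A
  isOpen_univ := fun _ _ => ⟨1, one_pos, fun _ _ => trivial⟩
  isOpen_inter := fun A B hA hB a ha => by
    obtain ⟨r1, hr1, h1⟩ := hA a ha.1
    obtain ⟨r2, hr2, h2⟩ := hB a ha.2
    refine ⟨min r1 r2, lt_min hr1 hr2, fun x hx => ⟨h1 ?_, h2 ?_⟩⟩
    · have hx' : d a x < min r1 r2 := hx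
      exact lt_of_lt_of_le hx' (min_le_left r1 r2)
    · have hx' : d a x < min r1 r2 := hx
      exact lt_of_lt_of_le hx' (min_le_right r1 r2)
  isOpen_sUnion := fun S hS a ha => by
    obtain ⟨A, hA, haA⟩ := ha
    obtain ⟨r, hr, h⟩ := hS A hA a haA
    exact ⟨r, hr, fun x hx => ⟨A, hA, h hx⟩⟩

private lemma exists_pos_forall_le_aux (f : ℕ → ℝ) (K : ℕ) (hf : ∀ k < K, 0 < f k) :
    ∃ δ > 0, ∀ k < K, δ ≤ f k := by
  induction K with
  | zero => exact ⟨1, one_pos, fun k hk => absurd hk (Nat.not_lt_zero k)⟩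
  | succ K ih =>
    obtain ⟨δ, hδ, h⟩ := ih (fun k hk => hf k (hk.trans (Nat.lt_succ_self K)))
    refine ⟨min δ (f K), lt_min hδ (hf K (Nat.lt_succ_self K)), fun k hk => ?_⟩
    rcases Nat.lt_succ_iff_lt_or_eq.mp hk with h' | rfl
    · exact le_trans (min_le_left _ _) (h k h')
    · exact min_le_right _ _

private lemma tauD_isOpen_iff {X : Type*} (d : X → X → ℝ) {A : Set X} :
    IsOpen[tauD d] A ↔ ∀ a ∈ A, ∃ r > 0, {x | d a x < r} ⊆ A := Iff.rfl

/-- Core lemma: if `d`-limits of sequences are unique, `s` is an antitone family of sets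
each containing an open neighborhood basis at `c` (in the sense of `hbasis`), and
`z n ∈ s n` but `d (z n) c` does not tend to `0`, we get a contradiction. -/
private lemma core_lemma {X : Type*} (d : X → X → ℝ) (hd : IsSemimetric d)
    (H : ∀ (x y : X) (xs : ℕ → X),
        Tendsto (fun n => d (xs n) x) atTop (𝓝 0) →
        Tendsto (fun n => d (xs n) y) atTop (𝓝 0) → x = y)
    (c : X) (s : ℕ → Set X)
    (hbasis : ∀ U : Set X, IsOpen[tauD d] U → c ∈ U → ∃ K, s K ⊆ U)
    (hanti : Antitone s) (z : ℕ → X) (hz : ∀ n, z n ∈ s n)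
    (hnt : ¬ Tendsto (fun n => d (z n) c) atTop (𝓝 0)) : False := by
  -- extract `ε` and a subsequence staying `ε`-away from `c`
  rw [Metric.tendsto_atTop] at hnt
  push_neg at hnt
  obtain ⟨ε, hε, hfreq⟩ := hnt
  have hfreq' : ∃ᶠ n in atTop, ε ≤ d (z n) c := by
    rw [Filter.frequently_atTop]
    intro N
    obtain ⟨n, hnN, hn⟩ := hfreq N
    refine ⟨n, hnN, ?_⟩
    have hdist : dist (d (z n) c) 0 = |d (z n) c| := by simp [Real.dist_eq]
    rwa [hdist, abs_of_nonneg (hd.nonneg _ _)] at hn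
  obtain ⟨φ, hφ, hφP⟩ := Filter.extraction_of_frequently_atTop hfreq'
  set w : ℕ → X := fun k => z (φ k) with hw_def
  have hw1 : ∀ k, ε ≤ d (w k) c := fun k => hφP k
  have hw2 : ∀ K k, K ≤ k → w k ∈ s K :=
    fun K k hKk => hanti (le_trans hKk hφ.le_apply) (hz (φ k))
  have hcw : ∀ k, c ≠ w k := by
    intro k hck
    have h0 : d (w k) c = 0 := by rw [← hck]; exact (hd.eq_iff c c).mpr rfl
    have := hw1 k
    rw [h0] at this
    linarith
  have hcW : c ∉ Set.range w := by rintro ⟨k, hk⟩; exact hcw k hk.symm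
  -- Step A: `(range w)ᶜ` is not open; get an accumulation point `a` of `range w`
  have hWnotopen : ¬ IsOpen[tauD d] (Set.range w)ᶜ := by
    intro hop
    obtain ⟨K, hK⟩ := hbasis _ hop hcW
    exact (hK (hw2 K K le_rfl)) (Set.mem_range_self K)
  rw [tauD_isOpen_iff] at hWnotopen
  push_neg at hWnotopen
  obtain ⟨a, haW, haprop⟩ := hWnotopen
  have haprop' : ∀ r > 0, ∃ p ∈ Set.range w, d a p < r := by
    intro r hr
    obtain hsub := haprop r hr
    rw [Set.not_subset] at hsub
    obtain ⟨p, hp1, hp2⟩ := hsub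
    exact ⟨p, Set.not_notMem.mp hp2, hp1⟩
  have hane : a ≠ c := by
    intro hac
    obtain ⟨p, ⟨k, hk⟩, hp⟩ := haprop' ε hε
    rw [← hk, hac] at hp
    have h1 := hw1 k
    rw [hd.symm (w k) c] at h1
    linarith
  -- Step B: choose `v j ∈ range w` with `d a (v j) < 1/(j+1)`
  have hv_ex : ∀ j : ℕ, ∃ p, p ∈ Set.range w ∧ d a p < 1 / (j + 1 : ℝ) := by
    intro j
    obtain ⟨p, hp1, hp2⟩ := haprop' (1 / (j + 1 : ℝ)) (by positivity)
    exact ⟨p, hp1, hp2⟩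
  choose v hvW hvd using hv_ex
  have hav : ∀ j, a ≠ v j := fun j hj => haW (hj ▸ hvW j)
  have hcv : ∀ j, c ≠ v j := by
    intro j hj
    obtain ⟨k, hk⟩ := hvW j
    exact hcw k (by rw [← hk] at hj; exact hj)
  -- Step C: every open set containing `c` contains some `v j`
  have hC : ∀ U : Set X, IsOpen[tauD d] U → c ∈ U → ∃ j, v j ∈ U := by
    intro U hU hcU
    obtain ⟨K, hK⟩ := hbasis U hU hcU
    obtain ⟨δ, hδ, hδle⟩ := exists_pos_forall_le_aux (fun k => d a (w k)) K (by
      intro k hk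
      rcases (hd.nonneg a (w k)).lt_or_eq with h | h
      · exact h
      · exact absurd ((hd.eq_iff a (w k)).mp h.symm) (fun he => haW (he ▸ Set.mem_range_self k)))
    obtain ⟨j, hj⟩ := exists_nat_one_div_lt hδ
    obtain ⟨k, hk⟩ := hvW j
    have hkK : K ≤ k := by
      by_contra hlt
      push_neg at hlt
      have h1 : δ ≤ d a (w k) := hδle k hlt
      have h2 : d a (w k) < 1 / (j + 1 : ℝ) := by rw [hk]; exact hvd j
      linarith
    exact ⟨j, hK (hk ▸ hw2 K k hkK)⟩
  -- Step D: `({a} ∪ range v)ᶜ` is not open; get a second accumulation point `b`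
  have hcS : c ∈ (insert a (Set.range v))ᶜ := by
    intro hc
    rcases hc with h | ⟨j, hj⟩
    · exact hane h.symm
    · exact hcv j hj.symm
  have hSnotopen : ¬ IsOpen[tauD d] (insert a (Set.range v))ᶜ := by
    intro hop
    obtain ⟨j, hj⟩ := hC _ hop hcS
    exact hj (Set.mem_insert_iff.mpr (Or.inr (Set.mem_range_self j)))
  rw [tauD_isOpen_iff] at hSnotopen
  push_neg at hSnotopen
  obtain ⟨b, hbS, hbprop⟩ := hSnotopen
  have hba : b ≠ a := fun h => hbS (by rw [h]; exact Set.mem_insert a _)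
  have hbv : ∀ j, b ≠ v j := fun j hj =>
    hbS (Set.mem_insert_iff.mpr (Or.inr (hj ▸ Set.mem_range_self j)))
  have hdba : 0 < d b a := by
    rcases (hd.nonneg b a).lt_or_eq with h | h
    · exact h
    · exact absurd ((hd.eq_iff b a).mp h.symm) hba
  have hbprop' : ∀ r > 0, ∃ p ∈ insert a (Set.range v), d b p < r := by
    intro r hr
    obtain hsub := hbprop r hr
    rw [Set.not_subset] at hsub
    obtain ⟨p, hp1, hp2⟩ := hsub
    exact ⟨p, Set.not_notMem.mp hp2, hp1⟩
  -- Step E: for every `M` and `r > 0` there is `j ≥ M` with `d b (v j) < r`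
  have hE : ∀ (M : ℕ) (r : ℝ), 0 < r → ∃ j, M ≤ j ∧ d b (v j) < r := by
    intro M r hr
    obtain ⟨δ, hδ, hδle⟩ := exists_pos_forall_le_aux (fun j => d b (v j)) M (by
      intro j hj
      rcases (hd.nonneg b (v j)).lt_or_eq with h | h
      · exact h
      · exact absurd ((hd.eq_iff b (v j)).mp h.symm) (hbv j))
    have hr' : 0 < min r (min δ (d b a)) := lt_min hr (lt_min hδ hdba)
    obtain ⟨p, hp1, hp2⟩ := hbprop' _ hr'
    rcases hp1 with h | ⟨j, hj⟩
    · rw [h] at hp2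
      have : d b a < d b a := lt_of_lt_of_le hp2 (le_trans (min_le_right _ _) (min_le_right _ _))
      linarith
    · rw [← hj] at hp2
      refine ⟨j, ?_, lt_of_lt_of_le hp2 (min_le_left _ _)⟩
      by_contra hlt
      push_neg at hlt
      have h1 : δ ≤ d b (v j) := hδle j hlt
      have h2 : d b (v j) < δ :=
        lt_of_lt_of_le hp2 (le_trans (min_le_right _ _) (min_le_left _ _))
      linarith
  -- build the sequence d-converging to both `a` and `b`
  have hg_ex : ∀ t : ℕ, ∃ j, t ≤ j ∧ d b (v j) < 1 / (t + 1 : ℝ) :=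
    fun t => hE t (1 / (t + 1 : ℝ)) (by positivity)
  choose g hg1 hg2 using hg_ex
  have hone : ∀ t : ℕ, (1 : ℝ) / (g t + 1) ≤ 1 / (t + 1) := by
    intro t
    apply one_div_le_one_div_of_le (by positivity)
    have : (t : ℝ) ≤ g t := Nat.cast_le.mpr (hg1 t)
    linarith
  have hta : Tendsto (fun t => d (v (g t)) a) atTop (𝓝 0) := by
    apply squeeze_zero (fun t => hd.nonneg _ _) (fun t => ?_)
      tendsto_one_div_add_atTop_nhds_zero_nat
    calc d (v (g t)) a = d a (v (g t)) := hd.symm _ _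
      _ ≤ 1 / (g t + 1 : ℝ) := le_of_lt (hvd (g t))
      _ ≤ 1 / (t + 1 : ℝ) := hone t
  have htb : Tendsto (fun t => d (v (g t)) b) atTop (𝓝 0) := by
    apply squeeze_zero (fun t => hd.nonneg _ _) (fun t => ?_)
      tendsto_one_div_add_atTop_nhds_zero_nat
    calc d (v (g t)) b = d b (v (g t)) := hd.symm _ _
      _ ≤ 1 / (t + 1 : ℝ) := le_of_lt (hg2 t)
  exact hba (H b a (fun t => v (g t)) htb hta)

theorem stmt_1 {X : Type*} (d : X → X → ℝ) (hd : IsSemimetric d)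
    (hfc : @FirstCountableTopology X (tauD d)) :
    (∀ (x y : X) (xs : ℕ → X),
        Tendsto (fun n => d (xs n) x) atTop (𝓝 0) →
        Tendsto (fun n => d (xs n) y) atTop (𝓝 0) → x = y) ↔
      @T2Space X (tauD d) := by
  letI : TopologicalSpace X := tauD d
  haveI : FirstCountableTopology X := hfc
  constructor
  · -- (i) → Hausdorff
    intro H
    rw [t2Space_iff]
    intro x y hxy
    by_contra hsep
    push_neg at hsep
    obtain ⟨s, hs⟩ := (𝓝 x).exists_antitone_basis
    obtain ⟨t, ht⟩ := (𝓝 y).exists_antitone_basis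
    have hz_ex : ∀ n : ℕ, ∃ p, p ∈ s n ∧ p ∈ t n := by
      intro n
      obtain ⟨U, hUs, hU, hxU⟩ := mem_nhds_iff.mp (hs.toHasBasis.mem_of_mem trivial)
      obtain ⟨V, hVt, hV, hyV⟩ := mem_nhds_iff.mp (ht.toHasBasis.mem_of_mem trivial)
      obtain ⟨p, hpU, hpV⟩ := Set.not_disjoint_iff.mp (hsep U V hU hV hxU hyV)
      exact ⟨p, hUs hpU, hVt hpV⟩
    choose z hz1 hz2 using hz_ex
    have hbx : ∀ U : Set X, IsOpen[tauD d] U → x ∈ U → ∃ K, s K ⊆ U := by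
      intro U hU hxU
      obtain ⟨K, -, hK⟩ := hs.toHasBasis.mem_iff.mp (hU.mem_nhds hxU)
      exact ⟨K, hK⟩
    have hby : ∀ U : Set X, IsOpen[tauD d] U → y ∈ U → ∃ K, t K ⊆ U := by
      intro U hU hyU
      obtain ⟨K, -, hK⟩ := ht.toHasBasis.mem_iff.mp (hU.mem_nhds hyU)
      exact ⟨K, hK⟩
    by_cases h1 : Tendsto (fun n => d (z n) x) atTop (𝓝 0)
    · by_cases h2 : Tendsto (fun n => d (z n) y) atTop (𝓝 0)
      · exact hxy (H x y z h1 h2)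
      · exact core_lemma d hd H y t hby ht.antitone z hz2 h2
    · exact core_lemma d hd H x s hbx hs.antitone z hz1 h1
  · -- Hausdorff → (i)
    intro hT2
    haveI : T2Space X := hT2
    intro x y xs hx hy
    have key : ∀ (c : X), Tendsto (fun n => d (xs n) c) atTop (𝓝 0) →
        Tendsto xs atTop (𝓝 c) := by
      intro c hc
      rw [Filter.tendsto_def]
      intro U hU
      obtain ⟨V, hVU, hV, hcV⟩ := mem_nhds_iff.mp hU
      obtain ⟨r, hr, hball⟩ := (tauD_isOpen_iff d).mp hV c hcV
      have hev : ∀ᶠ n in atTop, d (xs n) c < r := hc.eventually_lt_const hr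
      filter_upwards [hev] with n hn
      exact hVU (hball (show d c (xs n) < r from (hd.symm c (xs n)) ▸ hn))
    exact tendsto_nhds_unique (key x hx) (key y hy)
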